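/- For every x ∈ ℝ and every vector ψ ∈ ℂ³ with ‖ψ‖ = 1, det(Λ_x(ψψ†)) = (x²(1−x)/4) · |Σ_{i} ψ_i²|², where ψψ† is the outer product matrix with entries ψ_i·conj(ψ_j) and Σ_i ψ_i² is the (non-conjugated) bilinear square of ψ. -/

import Mathlib

open Matrix

/-- The interpolated Landau–Streater/Werner–Holevo channel
`Λ_x(ρ) = (1−x)·ρ + (x/2)·(Tr(ρ)·I₃ − ρᵀ)`. -/
noncomputable def Lam (x : ℝ) (ρ : Matrix (Fin 3) (Fin 3) ℂ) : Matrix (Fin 3) (Fin 3) ℂ :=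
  ((1 : ℂ) - (x : ℂ)) • ρ + ((x : ℂ) / 2) • (ρ.trace • (1 : Matrix (Fin 3) (Fin 3) ℂ) - ρᵀ)

/-- For every unit vector `ψ ∈ ℂ³`,
`det(Λ_x(ψψ†)) = (x²(1−x)/4) · |Σ_i ψ_i²|²`. -/
theorem lam_det_pure_state (x : ℝ) (ψ : EuclideanSpace ℂ (Fin 3)) (hψ : ‖ψ‖ = 1) :
    (Lam x (Matrix.vecMulVec (ψ : Fin 3 → ℂ) (star (ψ : Fin 3 → ℂ)))).det =
      ((x ^ 2 * (1 - x) / 4 * ‖∑ i : Fin 3, ψ i ^ 2‖ ^ 2 : ℝ) : ℂ) := by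
  have hnorm : ∑ i : Fin 3, Complex.normSq (ψ i) = 1 := by
    have h := hψ
    rw [EuclideanSpace.norm_eq] at h
    have h2 : ∑ i : Fin 3, ‖ψ i‖ ^ 2 = 1 := Real.sqrt_eq_one.mp h
    simpa [Complex.normSq_eq_norm_sq] using h2
  have h : ψ 0 * (starRingEnd ℂ) (ψ 0) + ψ 1 * (starRingEnd ℂ) (ψ 1)
      + ψ 2 * (starRingEnd ℂ) (ψ 2) = 1 := by
    have := congrArg (Complex.ofReal) hnorm
    push_cast [Fin.sum_univ_three] at this
    simpa [Complex.mul_conj] using this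
  have habs : (((‖ψ 0 ^ 2 + ψ 1 ^ 2 + ψ 2 ^ 2‖ : ℝ)) : ℂ) ^ 2
      = (ψ 0 ^ 2 + ψ 1 ^ 2 + ψ 2 ^ 2) * (starRingEnd ℂ) (ψ 0 ^ 2 + ψ 1 ^ 2 + ψ 2 ^ 2) := by
    rw [Complex.mul_conj, ← Complex.sq_norm]
    push_cast
    ring
  simp only [Lam, Matrix.det_fin_three, Matrix.add_apply, Matrix.smul_apply,
    Matrix.sub_apply, Matrix.one_apply, Matrix.transpose_apply, Matrix.vecMulVec_apply,
    Matrix.trace, Matrix.diag, Fin.sum_univ_three, smul_eq_mul, Pi.star_apply,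
    RCLike.star_def]
  push_cast [Fin.sum_univ_three]
  rw [habs]
  simp only [map_add, map_pow]
  linear_combination ((x:ℂ)^2 * (1 - (x:ℂ)) / 4 *
    (ψ 0 ^ 2 + ψ 1 ^ 2 + ψ 2 ^ 2) *
    ((starRingEnd ℂ) (ψ 0) ^ 2 + (starRingEnd ℂ) (ψ 1) ^ 2 + (starRingEnd ℂ) (ψ 2) ^ 2)) * h
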